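/- Let X be a metric space, μ a Borel probability measure on X, and f : X → X a continuous map. Then the following are equivalent: (1) for every pair of disjoint open sets U, V ⊆ X one has μ(U) + μ(f⁻¹(V)) ≤ 1; (2) for every open set U ⊆ X one has μ(U) = μ(f⁻¹(U)). -/

import Mathlib

open MeasureTheory Metric
open scoped ENNReal

lemma ennreal_aux {a c : ℝ≥0∞} (ha : a ≤ 1) (h : (1 - a) + c ≤ 1) : c ≤ a := by
  have h2 : c ≤ 1 - (1 - a) := ENNReal.le_sub_of_add_le_left
    (ne_top_of_le_ne_top ENNReal.one_ne_top tsub_le_self) h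
  rwa [ENNReal.sub_sub_cancel ENNReal.one_ne_top ha] at h2

theorem stmt_0 {X : Type*} [MetricSpace X] [MeasurableSpace X] [BorelSpace X]
    (μ : MeasureTheory.Measure X) [MeasureTheory.IsProbabilityMeasure μ]
    (f : X → X) (hf : Continuous f) :
    (∀ U V : Set X, IsOpen U → IsOpen V → Disjoint U V → μ U + μ (f ⁻¹' V) ≤ 1) ↔
      ∀ U : Set X, IsOpen U → μ U = μ (f ⁻¹' U) := by
  constructor
  · intro h U hU
    by_cases hne : Uᶜ.Nonempty
    · -- main case
      set g : X → ℝ := fun x => infDist x Uᶜ with hg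
      have hgc : Continuous g := continuous_infDist_pt _
      set A : ℕ → Set X := fun n => {x | 1 / (n + 1 : ℝ) < g x} with hA
      set B : ℕ → Set X := fun n => {x | g x < 1 / (n + 1 : ℝ)} with hB
      have hAopen : ∀ n, IsOpen (A n) := fun n => isOpen_lt continuous_const hgc
      have hBopen : ∀ n, IsOpen (B n) := fun n => isOpen_lt hgc continuous_const
      have hdisj : ∀ n, Disjoint (A n) (B n) := by
        intro n
        rw [Set.disjoint_left]
        intro x hx hx'
        simp only [hA, hB, Set.mem_setOf_eq] at hx hx'
        linarith
      have hBsup : ∀ n, Uᶜ ⊆ B n := by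
        intro n x hx
        have : g x = 0 := infDist_zero_of_mem hx
        simp only [hB, Set.mem_setOf_eq, this]
        positivity
      have hAsub : ∀ n, A n ⊆ U := by
        intro n x hx
        by_contra hxU
        have : g x = 0 := infDist_zero_of_mem hxU
        simp only [hA, Set.mem_setOf_eq, this] at hx
        have : (0:ℝ) < 1 / (n + 1 : ℝ) := by positivity
        linarith
      have hUnion : U = ⋃ n, A n := by
        apply Set.Subset.antisymm
        · intro x hx
          have hpos : 0 < g x :=
            (hU.isClosed_compl.notMem_iff_infDist_pos hne).1 (by simpa using hx)
          obtain ⟨n, hn⟩ := exists_nat_one_div_lt hpos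
          exact Set.mem_iUnion.2 ⟨n, hn⟩
        · exact Set.iUnion_subset hAsub
      have hmono : Monotone A := by
        intro m n hmn x hx
        simp only [hA, Set.mem_setOf_eq] at hx ⊢
        refine lt_of_le_of_lt ?_ hx
        apply one_div_le_one_div_of_le (by positivity)
        have : (m : ℝ) ≤ n := Nat.cast_le.2 hmn
        linarith
      have hμU : μ U = ⨆ n, μ (A n) := by
        rw [hUnion]; exact (hmono.directed_le).measure_iUnion
      have hmono' : Monotone (fun n => f ⁻¹' (A n)) :=
        fun m n hmn => Set.preimage_mono (hmono hmn)
      have hμfU : μ (f ⁻¹' U) = ⨆ n, μ (f ⁻¹' (A n)) := by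
        rw [hUnion, Set.preimage_iUnion]
        exact (hmono'.directed_le).measure_iUnion
      have hb : μ (f ⁻¹' U) ≤ 1 := prob_le_one
      have ha : μ U ≤ 1 := prob_le_one
      apply le_antisymm
      · rw [hμU]
        refine iSup_le fun n => ?_
        have h1 := h (A n) (B n) (hAopen n) (hBopen n) (hdisj n)
        have h2 : 1 - μ (f ⁻¹' U) ≤ μ (f ⁻¹' (B n)) := by
          rw [← prob_compl_eq_one_sub (hU.measurableSet.preimage hf.measurable)]
          refine measure_mono ?_
          rw [← Set.preimage_compl]
          exact Set.preimage_mono (hBsup n)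
        refine ennreal_aux hb ?_
        calc (1 - μ (f ⁻¹' U)) + μ (A n) ≤ μ (f ⁻¹' (B n)) + μ (A n) := by
              exact add_le_add_left h2 _
          _ = μ (A n) + μ (f ⁻¹' (B n)) := add_comm _ _
          _ ≤ 1 := h1
      · rw [hμfU]
        refine iSup_le fun n => ?_
        have h1 := h (B n) (A n) (hBopen n) (hAopen n) (hdisj n).symm
        have h2 : 1 - μ U ≤ μ (B n) := by
          rw [← prob_compl_eq_one_sub hU.measurableSet]
          exact measure_mono (hBsup n)
        refine ennreal_aux ha ?_
        calc (1 - μ U) + μ (f ⁻¹' (A n)) ≤ μ (B n) + μ (f ⁻¹' (A n)) :=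
              add_le_add_left h2 _
          _ ≤ 1 := h1
    · rw [Set.not_nonempty_iff_eq_empty, Set.compl_empty_iff] at hne
      subst hne
      simp
  · intro h U V hUo hVo hd
    rw [← h V hVo, ← measure_union hd hVo.measurableSet]
    exact measure_mono (Set.subset_univ _) |>.trans (by simp)
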